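/- Under the same hypotheses, define g₀(x) = x + η₀∇u₀(x) where ∇u₀ exists and g₀(x) = x otherwise. Then T₁ := T₀ ∘ g₀ is an optimal transport map for the pair (μ̃, ν) where μ̃ = (f₀)_#μ, and the minimal transport length satisfies ℓ₀(T₁) ≥ ℓ₀(T₀) − η₀. -/

import Mathlib

open MeasureTheory Real
open scoped RealInnerProductSpace NNReal

noncomputable section

abbrev Euc (d : ℕ) := EuclideanSpace ℝ (Fin d)

section AuxLemmas

variable {d : ℕ}

lemma sqrt_aux {t c : ℝ} (ht : 0 < t) (h : 0 ≤ t ^ 2 + c) :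
    Real.sqrt (t ^ 2 + c) ≤ t + c / (2 * t) := by
  have h2t : (2 * t) ≠ 0 := by positivity
  have hd : 2 * t * (c / (2 * t)) = c := mul_div_cancel₀ _ h2t
  have h1 : -t / 2 ≤ c / (2 * t) := by
    rw [div_le_div_iff₀ (by norm_num) (by positivity)]
    nlinarith
  have hR : 0 ≤ t + c / (2 * t) := by linarith
  have h2 : t ^ 2 + c ≤ (t + c / (2 * t)) ^ 2 := by nlinarith [sq_nonneg (c / (2 * t))]
  calc Real.sqrt (t ^ 2 + c) ≤ Real.sqrt ((t + c / (2 * t)) ^ 2) := Real.sqrt_le_sqrt h2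
    _ = t + c / (2 * t) := Real.sqrt_sq hR

lemma norm_smul_add_le {d : ℕ} {v h : Euc d} (hv : ‖v‖ = 1) {t : ℝ} (ht : 0 < t) :
    ‖t • v + h‖ ≤ t + ⟪v, h⟫ + ‖h‖ ^ 2 / (2 * t) := by
  have expand : ‖t • v + h‖ ^ 2 = t ^ 2 + (2 * t * ⟪v, h⟫ + ‖h‖ ^ 2) := by
    rw [← real_inner_self_eq_norm_sq]
    rw [real_inner_add_add_self]
    rw [real_inner_smul_left, real_inner_smul_left, real_inner_smul_right,
      real_inner_self_eq_norm_sq, real_inner_self_eq_norm_sq, hv]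
    ring
  have h0 : (0:ℝ) ≤ t ^ 2 + (2 * t * ⟪v, h⟫ + ‖h‖ ^ 2) := by
    rw [← expand]; positivity
  have := sqrt_aux ht h0
  rw [← expand, Real.sqrt_sq (norm_nonneg _)] at this
  have h2t : (2 * t) ≠ 0 := by positivity
  calc ‖t • v + h‖ ≤ t + (2 * t * ⟪v, h⟫ + ‖h‖ ^ 2) / (2 * t) := this
    _ = t + ⟪v, h⟫ + ‖h‖ ^ 2 / (2 * t) := by field_simp; ring


lemma lip_sub_le {u : Euc d → ℝ} (hu : LipschitzWith 1 u) (a b : Euc d) :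
    u a - u b ≤ ‖a - b‖ := by
  have := hu.dist_le_mul a b
  rw [Real.dist_eq, dist_eq_norm] at this
  calc u a - u b ≤ |u a - u b| := le_abs_self _
    _ ≤ ‖a - b‖ := by simpa using this

lemma squeeze_ray {u : Euc d → ℝ} (hu : LipschitzWith 1 u) {v x : Euc d}
    (hv : ‖v‖ = 1) {t r : ℝ} (hr : 0 ≤ r) (hrt : r ≤ t)
    (h : u x - u (x - t • v) = t) : u x - u (x - r • v) = r := by
  have h1 : u x - u (x - r • v) ≤ r := by
    have := lip_sub_le hu x (x - r • v)
    rwa [sub_sub_cancel, norm_smul, hv, Real.norm_eq_abs, abs_of_nonneg hr, mul_one] at this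
  have h2 : u (x - r • v) - u (x - t • v) ≤ t - r := by
    have := lip_sub_le hu (x - r • v) (x - t • v)
    have he : (x - r • v) - (x - t • v) = (t - r) • v := by
      rw [sub_smul]; abel
    rwa [he, norm_smul, Real.norm_eq_abs, hv, abs_of_nonneg (by linarith), mul_one] at this
  linarith

lemma div_sq_le_C {a b C : ℝ} (hb : 0 < b) (hC : 1 / (2 * b) ≤ C) (ha : 0 ≤ a) :
    a / (2 * b) ≤ C * a := by
  rw [div_eq_mul_inv, mul_comm]
  exact mul_le_mul_of_nonneg_right (by rwa [← one_div]) ha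

lemma hasGradientAt_of_segment {u : Euc d → ℝ} (hu : LipschitzWith 1 u)
    {v z : Euc d} (hv : ‖v‖ = 1) {s t : ℝ} (hs : 0 < s) (ht : 0 < t)
    (ha : u (z + s • v) - u z = s) (hb : u z - u (z - t • v) = t) :
    HasGradientAt u v z := by
  obtain ⟨C, hC⟩ : ∃ C : ℝ, C = 1 / (2 * s) + 1 / (2 * t) := ⟨_, rfl⟩
  have hCpos : 0 < C := by rw [hC]; positivity
  have hCs : 1 / (2 * s) ≤ C := by
    have : 0 < 1 / (2 * t) := by positivity
    linarith
  have hCt : 1 / (2 * t) ≤ C := by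
    have : 0 < 1 / (2 * s) := by positivity
    linarith
  have upper : ∀ h : Euc d, u (z + h) - u z - ⟪v, h⟫ ≤ C * ‖h‖ ^ 2 := by
    intro h
    have h1 : u (z + h) - u (z - t • v) ≤ ‖t • v + h‖ := by
      have := lip_sub_le hu (z + h) (z - t • v)
      have he : (z + h) - (z - t • v) = t • v + h := by abel
      rwa [he] at this
    have h2 := norm_smul_add_le hv ht (h := h)
    have h4 : ‖h‖ ^ 2 / (2 * t) ≤ C * ‖h‖ ^ 2 := div_sq_le_C ht hCt (sq_nonneg _)
    linarith [h1, h2, h4, hb, ha]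
  have lower : ∀ h : Euc d, ⟪v, h⟫ - C * ‖h‖ ^ 2 ≤ u (z + h) - u z := by
    intro h
    have h1 : u (z + s • v) - u (z + h) ≤ ‖s • v + (-h)‖ := by
      have := lip_sub_le hu (z + s • v) (z + h)
      have he : (z + s • v) - (z + h) = s • v + (-h) := by abel
      rwa [he] at this
    have h2 := norm_smul_add_le hv hs (h := -h)
    rw [inner_neg_right, norm_neg] at h2
    have h4 : ‖h‖ ^ 2 / (2 * s) ≤ C * ‖h‖ ^ 2 := div_sq_le_C hs hCs (sq_nonneg _)
    linarith
  rw [hasGradientAt_iff_hasFDerivAt, hasFDerivAt_iff_isLittleO_nhds_zero,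
    Asymptotics.isLittleO_iff]
  intro c hc
  have hball : Metric.ball (0 : Euc d) (c / C) ∈ nhds (0 : Euc d) :=
    Metric.ball_mem_nhds 0 (by positivity)
  filter_upwards [hball] with h hh
  rw [Metric.mem_ball, dist_zero_right] at hh
  have happ : (InnerProductSpace.toDual ℝ (Euc d) v) h = ⟪v, h⟫ := rfl
  rw [happ, Real.norm_eq_abs, abs_le]
  have hbd : C * ‖h‖ ^ 2 ≤ c * ‖h‖ := by
    have h1 : C * ‖h‖ ≤ c := by
      rw [mul_comm, ← le_div_iff₀ hCpos]
      exact hh.le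
    calc C * ‖h‖ ^ 2 = (C * ‖h‖) * ‖h‖ := by ring
      _ ≤ c * ‖h‖ := mul_le_mul_of_nonneg_right h1 (norm_nonneg _)
  constructor
  · have := lower h; linarith
  · have := upper h; linarith

lemma gradient_eq_of_ray {u : Euc d → ℝ} (hu : LipschitzWith 1 u) {v x : Euc d}
    (hv : ‖v‖ = 1) {t : ℝ} (ht : 0 < t) (h : u x - u (x - t • v) = t)
    (hd : DifferentiableAt ℝ u x) : gradient u x = v := by
  set g := gradient u x with hg
  have hfd : HasFDerivAt u (InnerProductSpace.toDual ℝ (Euc d) g) x :=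
    hd.hasGradientAt.hasFDerivAt
  rw [hasFDerivAt_iff_isLittleO_nhds_zero, Asymptotics.isLittleO_iff] at hfd
  have key : ∀ ε : ℝ, 0 < ε → |⟪g, v⟫ - 1| ≤ ε := by
    intro ε hε
    have h2 := hfd hε
    rw [Metric.eventually_nhds_iff] at h2
    obtain ⟨δ, hδ, hball⟩ := h2
    obtain ⟨r, hr0, hrδ, hrt⟩ : ∃ r : ℝ, 0 < r ∧ r < δ ∧ r ≤ t :=
      ⟨min (δ / 2) t, by positivity, by
        calc min (δ / 2) t ≤ δ / 2 := min_le_left _ _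
          _ < δ := by linarith, min_le_right _ _⟩
    have hsq : u x - u (x - r • v) = r := squeeze_ray hu hv hr0.le hrt h
    have hnorm : ‖(-r) • v‖ = r := by
      rw [norm_smul, hv, Real.norm_eq_abs, abs_neg, abs_of_nonneg hr0.le, mul_one]
    have hmem : dist ((-r) • v) (0 : Euc d) < δ := by
      rw [dist_zero_right, hnorm]; exact hrδ
    have := hball hmem
    rw [hnorm] at this
    have he1 : x + (-r) • v = x - r • v := by
      rw [neg_smul]; abel
    have he2 : (InnerProductSpace.toDual ℝ (Euc d) g) ((-r) • v) = (-r) * ⟪g, v⟫ := by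
      rw [_root_.map_smul]; simp [InnerProductSpace.toDual_apply_apply]
    rw [he1, he2] at this
    have he3 : u (x - r • v) - u x = -r := by linarith
    rw [he3] at this
    have habs : ‖-r - (-r) * ⟪g, v⟫‖ = r * |⟪g, v⟫ - 1| := by
      rw [Real.norm_eq_abs]
      have : -r - (-r) * ⟪g, v⟫ = r * (⟪g, v⟫ - 1) := by ring
      rw [this, abs_mul, abs_of_nonneg hr0.le]
    rw [habs] at this
    have := (mul_le_mul_iff_right₀ hr0).mp (by linarith [this] : r * |⟪g, v⟫ - 1| ≤ r * ε)
    linarith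
  have hgv : ⟪g, v⟫ = 1 := by
    have habs : |⟪g, v⟫ - 1| ≤ 0 := by
      by_contra hcon
      push_neg at hcon
      linarith [key (|⟪g, v⟫ - 1| / 2) (by linarith)]
    have := abs_nonpos_iff.mp habs
    linarith [sub_eq_zero.mp this]
  have hgle : ‖g‖ ≤ 1 := by
    have h1 : ‖fderiv ℝ u x‖ ≤ ((1 : NNReal) : ℝ) := norm_fderiv_le_of_lipschitz ℝ hu
    have h2 : ‖g‖ = ‖fderiv ℝ u x‖ := by
      rw [hg]
      exact (LinearIsometryEquiv.norm_map (InnerProductSpace.toDual ℝ (Euc d)).symm _)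
    rw [h2]; simpa using h1
  have hge : 1 ≤ ‖g‖ := by
    have := real_inner_le_norm g v
    rw [hgv, hv, mul_one] at this
    linarith
  have hnorm : ‖g‖ = 1 := le_antisymm hgle hge
  have : ‖v‖ • g = ‖g‖ • v := inner_eq_norm_mul_iff_real.mp (by rw [hgv, hnorm, hv, mul_one])
  rw [hv, hnorm, one_smul, one_smul] at this
  exact this

lemma key_pointwise {u : Euc d → ℝ} (hu : LipschitzWith 1 u)
    {T f g : Euc d → Euc d} {η : ℝ} (hη : 0 < η) {x : Euc d}
    (hf : DifferentiableAt ℝ u x → f x = x - η • gradient u x)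
    (hg : ∀ y, DifferentiableAt ℝ u y → g y = y + η • gradient u y)
    (hlt : η < ‖x - T x‖) (heq : u x - u (T x) = ‖x - T x‖)
    (hd : DifferentiableAt ℝ u x) :
    g (f x) = x ∧ ‖f x - T x‖ = ‖x - T x‖ - η ∧ u (f x) = u x - η := by
  obtain ⟨ℓ, hℓ⟩ : ∃ ℓ : ℝ, ℓ = ‖x - T x‖ := ⟨_, rfl⟩
  have hℓpos : 0 < ℓ := by rw [hℓ]; linarith
  obtain ⟨v, hvdef⟩ : ∃ v : Euc d, v = ℓ⁻¹ • (x - T x) := ⟨_, rfl⟩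
  have hv : ‖v‖ = 1 := by
    rw [hvdef, norm_smul, Real.norm_eq_abs, abs_of_pos (inv_pos.mpr hℓpos), ← hℓ,
      inv_mul_cancel₀ hℓpos.ne']
  have hℓv : ℓ • v = x - T x := by
    rw [hvdef, smul_smul, mul_inv_cancel₀ hℓpos.ne', one_smul]
  have hTx : T x = x - ℓ • v := by rw [hℓv]; abel
  have ray : u x - u (x - ℓ • v) = ℓ := by rw [← hTx, heq, hℓ]
  have grad_x : gradient u x = v := gradient_eq_of_ray hu hv hℓpos ray hd
  have hfx : f x = x - η • v := by rw [hf hd, grad_x]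
  have e1 : u x - u (x - η • v) = η :=
    squeeze_ray hu hv hη.le (by rw [hℓ]; exact hlt.le) ray
  have e2 : u (x - η • v) - u (x - ℓ • v) = ℓ - η := by linarith
  have hz1 : (x - η • v) + η • v = x := by abel
  have hz2 : (x - η • v) - (ℓ - η) • v = x - ℓ • v := by
    rw [sub_smul]; abel
  have interior : HasGradientAt u v (x - η • v) := by
    apply hasGradientAt_of_segment hu hv hη (by linarith : (0:ℝ) < ℓ - η)
    · rw [hz1]; exact e1
    · rw [hz2]; exact e2
  have hdz : DifferentiableAt ℝ u (x - η • v) := interior.hasFDerivAt.differentiableAt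
  have grad_z : gradient u (x - η • v) = v := interior.gradient
  refine ⟨?_, ?_, ?_⟩
  · rw [hfx, hg _ hdz, grad_z, hz1]
  · have : f x - T x = (ℓ - η) • v := by
      rw [hfx, hTx, sub_smul]; abel
    rw [this, norm_smul, Real.norm_eq_abs, hv, mul_one, abs_of_pos (by linarith), hℓ]
  · rw [hfx]; linarith

end AuxLemmas

/-- The Wasserstein-1 distance, defined through Kantorovich duality as the supremum of
`∫ u dμ - ∫ u dν` over 1-Lipschitz functions `u`. -/
def W1 {d : ℕ} (μ ν : Measure (Euc d)) : ℝ :=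
  sSup {r : ℝ | ∃ u : Euc d → ℝ, LipschitzWith 1 u ∧ r = (∫ x, u x ∂μ) - ∫ y, u y ∂ν}

/-- `u` is a Kantorovich potential for the pair `(μ, ν)`. -/
def IsKantorovichPotential {d : ℕ} (u : Euc d → ℝ) (μ ν : Measure (Euc d)) : Prop :=
  LipschitzWith 1 u ∧ (∫ x, u x ∂μ) - ∫ y, u y ∂ν = W1 μ ν

/-- `T` is an optimal transport map for the pair `(μ, ν)`. -/
def IsOptimalMap {d : ℕ} (T : Euc d → Euc d) (μ ν : Measure (Euc d)) : Prop :=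
  Measure.map T μ = ν ∧ (∫ x, ‖x - T x‖ ∂μ) = W1 μ ν

/-- The minimal transport length `ℓ₀(T) = essinf_μ |Id - T|`. -/
def ell0 {d : ℕ} (T : Euc d → Euc d) (μ : Measure (Euc d)) : ℝ :=
  essInf (fun x => ‖x - T x‖) μ

/-- `T₁ = T₀ ∘ g₀` is an optimal transport map for `((f₀)_#μ, ν)` and
`ℓ₀(T₁) ≥ ℓ₀(T₀) - η₀`. -/
theorem composed_map_is_optimal {d : ℕ} (Ω : Set (Euc d))
    (hΩc : IsCompact Ω) (hΩconv : Convex ℝ Ω)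
    (μ ν : Measure (Euc d)) [IsProbabilityMeasure μ] [IsProbabilityMeasure ν]
    (hμΩ : μ Ωᶜ = 0) (hνΩ : ν Ωᶜ = 0) (hac : μ ≪ volume)
    (u₀ : Euc d → ℝ) (hu₀ : IsKantorovichPotential u₀ μ ν)
    (T₀ : Euc d → Euc d) (hT₀ : IsOptimalMap T₀ μ ν)
    (η₀ : ℝ) (hη₀pos : 0 < η₀) (hη₀ : η₀ < ell0 T₀ μ)
    (f₀ g₀ : Euc d → Euc d) (hf₀m : Measurable f₀)
    (hf₀ : ∀ x, DifferentiableAt ℝ u₀ x → f₀ x = x - η₀ • gradient u₀ x)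
    (hf₀' : ∀ x, ¬ DifferentiableAt ℝ u₀ x → f₀ x = x)
    (hg₀ : ∀ x, DifferentiableAt ℝ u₀ x → g₀ x = x + η₀ • gradient u₀ x)
    (hg₀' : ∀ x, ¬ DifferentiableAt ℝ u₀ x → g₀ x = x) :
    IsOptimalMap (T₀ ∘ g₀) (Measure.map f₀ μ) ν ∧
      ell0 T₀ μ - η₀ ≤ ell0 (T₀ ∘ g₀) (Measure.map f₀ μ) := by
  obtain ⟨hLip, hKant⟩ := hu₀
  obtain ⟨hT₀map, hT₀cost⟩ := hT₀
  have hcont : Continuous u₀ := hLip.continuous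
  -- T₀ is a.e. measurable
  have hT₀ae : AEMeasurable T₀ μ := by
    by_contra hn
    have h0 : ν = 0 := by rw [← hT₀map, Measure.map_of_not_aemeasurable hn]
    have := measure_univ (μ := ν)
    simp [h0] at this
  -- gradient bound and measurability of g₀
  have hgrad_le : ∀ y : Euc d, ‖gradient u₀ y‖ ≤ 1 := by
    intro y
    have h1 : ‖fderiv ℝ u₀ y‖ ≤ ((1 : ℝ≥0) : ℝ) := norm_fderiv_le_of_lipschitz ℝ hLip
    have h2 : ‖gradient u₀ y‖ = ‖fderiv ℝ u₀ y‖ :=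
      (LinearIsometryEquiv.norm_map (InnerProductSpace.toDual ℝ (Euc d)).symm _)
    rw [h2]; simpa using h1
  have hg₀eq : g₀ = fun x => x + η₀ • gradient u₀ x := by
    funext x
    by_cases hd : DifferentiableAt ℝ u₀ x
    · exact hg₀ x hd
    · rw [hg₀' x hd, gradient_eq_zero_of_not_differentiableAt hd, smul_zero, add_zero]
  have hgradm : Measurable (fun x => gradient u₀ x) :=
    (InnerProductSpace.toDual ℝ (Euc d)).symm.continuous.measurable.comp
      (measurable_fderiv ℝ u₀)
  have hg₀m : Measurable g₀ := by
    rw [hg₀eq]; exact measurable_id.add (hgradm.const_smul η₀)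
  -- bound on Ω
  obtain ⟨R, hR⟩ := hΩc.isBounded.subset_closedBall 0
  have hΩnorm : ∀ y ∈ Ω, ‖y‖ ≤ R := by
    intro y hy
    simpa [Metric.mem_closedBall, dist_zero_right] using hR hy
  have hΩne : Ω.Nonempty := by
    by_contra h
    rw [Set.not_nonempty_iff_eq_empty] at h
    rw [h, Set.compl_empty, measure_univ] at hμΩ
    exact one_ne_zero hμΩ
  have hRnn : (0:ℝ) ≤ R := le_trans (norm_nonneg hΩne.choose) (hΩnorm _ hΩne.choose_spec)
  have hxΩ : ∀ᵐ x ∂μ, x ∈ Ω := mem_ae_iff.mpr hμΩ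
  have hmeasΩc : MeasurableSet Ωᶜ := hΩc.isClosed.measurableSet.compl
  have hTΩ : ∀ᵐ x ∂μ, T₀ x ∈ Ω := by
    apply mem_ae_iff.mpr
    have : μ (T₀ ⁻¹' Ωᶜ) = 0 := by
      rw [← Measure.map_apply_of_aemeasurable hT₀ae hmeasΩc, hT₀map]; exact hνΩ
    exact this
  -- basic Lipschitz bound
  have habs : ∀ y : Euc d, |u₀ y| ≤ |u₀ 0| + ‖y‖ := by
    intro y
    have h1 := lip_sub_le hLip y 0
    have h2 := lip_sub_le hLip 0 y
    rw [sub_zero] at h1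
    rw [zero_sub, norm_neg] at h2
    rw [abs_le]; constructor
    · linarith [neg_abs_le (u₀ 0)]
    · linarith [le_abs_self (u₀ 0)]
  -- integrability over μ
  have Iu : Integrable u₀ μ := by
    apply (integrable_const (|u₀ 0| + R)).mono' hcont.aestronglyMeasurable
    filter_upwards [hxΩ] with x hx
    have := habs x
    have h2 := hΩnorm x hx
    rw [Real.norm_eq_abs]; linarith
  have IuT : Integrable (fun x => u₀ (T₀ x)) μ := by
    apply (integrable_const (|u₀ 0| + R)).mono'
      (hcont.measurable.comp_aemeasurable hT₀ae).aestronglyMeasurable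
    filter_upwards [hTΩ] with x hx
    have := habs (T₀ x)
    have h2 := hΩnorm _ hx
    rw [Real.norm_eq_abs]
    simp only [Function.comp_apply]
    linarith
  have Inrm : Integrable (fun x => ‖x - T₀ x‖) μ := by
    apply (integrable_const (R + R)).mono'
      ((aemeasurable_id.sub hT₀ae).norm).aestronglyMeasurable
    filter_upwards [hxΩ, hTΩ] with x hx hTx
    rw [Real.norm_eq_abs, abs_of_nonneg (norm_nonneg _)]
    calc ‖x - T₀ x‖ ≤ ‖x‖ + ‖T₀ x‖ := norm_sub_le _ _
      _ ≤ R + R := add_le_add (hΩnorm _ hx) (hΩnorm _ hTx)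
  -- the potential achieves equality a.e.
  have hνint : ∫ y, u₀ y ∂ν = ∫ x, u₀ (T₀ x) ∂μ := by
    rw [← hT₀map, integral_map hT₀ae hcont.aestronglyMeasurable]
  have Isub : Integrable (fun x => u₀ x - u₀ (T₀ x)) μ := Iu.sub IuT
  have hzero : ∫ x, (‖x - T₀ x‖ - (u₀ x - u₀ (T₀ x))) ∂μ = 0 := by
    rw [integral_sub Inrm Isub, integral_sub Iu IuT, hT₀cost, ← hνint]
    linarith [hKant]
  have heqae : ∀ᵐ x ∂μ, u₀ x - u₀ (T₀ x) = ‖x - T₀ x‖ := by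
    have hnn : 0 ≤ᵐ[μ] fun x => ‖x - T₀ x‖ - (u₀ x - u₀ (T₀ x)) := by
      filter_upwards with x
      have := lip_sub_le hLip x (T₀ x)
      simp only [Pi.zero_apply]; linarith
    have := (integral_eq_zero_iff_of_nonneg_ae hnn (Inrm.sub Isub)).mp hzero
    filter_upwards [this] with x hx
    have : ‖x - T₀ x‖ - (u₀ x - u₀ (T₀ x)) = 0 := hx
    linarith
  -- differentiability a.e.
  have hdiffae : ∀ᵐ x ∂μ, DifferentiableAt ℝ u₀ x :=
    hac.ae_le (hLip.ae_differentiableAt (μ := volume))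
  -- essInf lower bound a.e.
  have hbdd : Filter.IsBoundedUnder (· ≥ ·) (ae μ) (fun x => ‖x - T₀ x‖) :=
    ⟨0, Filter.eventually_map.mpr (Filter.Eventually.of_forall fun x => norm_nonneg _)⟩
  have hessae : ∀ᵐ x ∂μ, ell0 T₀ μ ≤ ‖x - T₀ x‖ := ae_essInf_le hbdd
  -- the key pointwise facts
  have hkey : ∀ᵐ x ∂μ, g₀ (f₀ x) = x ∧ ‖f₀ x - T₀ x‖ = ‖x - T₀ x‖ - η₀ ∧
      u₀ (f₀ x) = u₀ x - η₀ := by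
    filter_upwards [heqae, hdiffae, hessae] with x he hd hess
    exact key_pointwise hLip hη₀pos (hf₀ x) hg₀ (lt_of_lt_of_le hη₀ hess) he hd
  haveI : IsProbabilityMeasure (Measure.map f₀ μ) :=
    Measure.isProbabilityMeasure_map hf₀m.aemeasurable
  -- pull back
  have m1 : Measure.map g₀ (Measure.map f₀ μ) = μ := by
    rw [Measure.map_map hg₀m hf₀m]
    have heq : (g₀ ∘ f₀) =ᵐ[μ] id := hkey.mono fun x h => h.1
    rw [Measure.map_congr heq, Measure.map_id]
  have hTμ' : AEMeasurable T₀ (Measure.map g₀ (Measure.map f₀ μ)) := by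
    rw [m1]; exact hT₀ae
  have hTgae : AEMeasurable (T₀ ∘ g₀) (Measure.map f₀ μ) :=
    AEMeasurable.comp_measurable hTμ' hg₀m
  have m2 : Measure.map (T₀ ∘ g₀) (Measure.map f₀ μ) = ν := by
    rw [← AEMeasurable.map_map_of_aemeasurable hTμ' hg₀m.aemeasurable, m1, hT₀map]
  -- a.e. bounds for the pushforward measure
  have hyR : ∀ᵐ y ∂(Measure.map f₀ μ), ‖y‖ ≤ R + η₀ := by
    rw [MeasureTheory.ae_map_iff hf₀m.aemeasurable
      (measurableSet_le measurable_norm measurable_const)]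
    filter_upwards [hxΩ, hdiffae] with x hx hd
    rw [hf₀ x hd]
    calc ‖x - η₀ • gradient u₀ x‖ ≤ ‖x‖ + ‖η₀ • gradient u₀ x‖ := norm_sub_le _ _
      _ ≤ R + η₀ := by
          apply add_le_add (hΩnorm _ hx)
          rw [norm_smul, Real.norm_eq_abs, abs_of_pos hη₀pos]
          nlinarith [hgrad_le x, norm_nonneg (gradient u₀ x)]
  have hTgΩ : ∀ᵐ y ∂(Measure.map f₀ μ), (T₀ ∘ g₀) y ∈ Ω := by
    apply mem_ae_iff.mpr
    have : (Measure.map f₀ μ) ((T₀ ∘ g₀) ⁻¹' Ωᶜ) = 0 := by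
      rw [← Measure.map_apply_of_aemeasurable hTgae hmeasΩc, m2]; exact hνΩ
    exact this
  -- the transport cost of the composed map
  have hFae : AEStronglyMeasurable (fun y => ‖y - (T₀ ∘ g₀) y‖) (Measure.map f₀ μ) :=
    ((aemeasurable_id.sub hTgae).norm).aestronglyMeasurable
  have IF : Integrable (fun y => ‖y - (T₀ ∘ g₀) y‖) (Measure.map f₀ μ) := by
    apply (integrable_const ((R + η₀) + R)).mono' hFae
    filter_upwards [hyR, hTgΩ] with y hy hTy
    rw [Real.norm_eq_abs, abs_of_nonneg (norm_nonneg _)]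
    calc ‖y - (T₀ ∘ g₀) y‖ ≤ ‖y‖ + ‖(T₀ ∘ g₀) y‖ := norm_sub_le _ _
      _ ≤ (R + η₀) + R := add_le_add hy (hΩnorm _ hTy)
  have hA : ∫ y, ‖y - (T₀ ∘ g₀) y‖ ∂(Measure.map f₀ μ) = W1 μ ν - η₀ := by
    rw [integral_map hf₀m.aemeasurable hFae]
    have hcongr : (fun x => ‖f₀ x - (T₀ ∘ g₀) (f₀ x)‖) =ᵐ[μ]
        fun x => ‖x - T₀ x‖ - η₀ := by
      filter_upwards [hkey] with x hx
      simp only [Function.comp_apply, hx.1]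
      exact hx.2.1
    rw [integral_congr_ae hcongr, integral_sub Inrm (integrable_const η₀),
      integral_const, probReal_univ, one_smul, hT₀cost]
  -- every dual competitor is bounded by the cost
  have hub : ∀ r ∈ {r : ℝ | ∃ u : Euc d → ℝ, LipschitzWith 1 u ∧
      r = (∫ x, u x ∂(Measure.map f₀ μ)) - ∫ y, u y ∂ν}, r ≤ W1 μ ν - η₀ := by
    rintro r ⟨u, hu, rfl⟩
    have hνi : ∫ y, u y ∂ν = ∫ y, u ((T₀ ∘ g₀) y) ∂(Measure.map f₀ μ) := by
      rw [← m2, integral_map hTgae hu.continuous.aestronglyMeasurable]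
    have habsu : ∀ y : Euc d, |u y| ≤ |u 0| + ‖y‖ := by
      intro y
      have h1 := lip_sub_le hu y 0
      have h2 := lip_sub_le hu 0 y
      rw [sub_zero] at h1
      rw [zero_sub, norm_neg] at h2
      rw [abs_le]; constructor
      · linarith [neg_abs_le (u 0)]
      · linarith [le_abs_self (u 0)]
    have Iu1 : Integrable u (Measure.map f₀ μ) := by
      apply (integrable_const (|u 0| + (R + η₀))).mono' hu.continuous.aestronglyMeasurable
      filter_upwards [hyR] with y hy
      have := habsu y
      rw [Real.norm_eq_abs]; linarith
    have Iu2 : Integrable (fun y => u ((T₀ ∘ g₀) y)) (Measure.map f₀ μ) := by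
      apply (integrable_const (|u 0| + R)).mono'
        (hu.continuous.measurable.comp_aemeasurable hTgae).aestronglyMeasurable
      filter_upwards [hTgΩ] with y hy
      have := habsu ((T₀ ∘ g₀) y)
      have h2 := hΩnorm _ hy
      rw [Real.norm_eq_abs]
      simp only [Function.comp_apply] at this h2 ⊢
      linarith
    have Isub2 : Integrable (fun y => u y - u ((T₀ ∘ g₀) y)) (Measure.map f₀ μ) :=
      Iu1.sub Iu2
    rw [hνi, ← integral_sub Iu1 Iu2, ← hA]
    apply integral_mono Isub2 IF
    intro y
    exact lip_sub_le hu y ((T₀ ∘ g₀) y)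
  have hne : {r : ℝ | ∃ u : Euc d → ℝ, LipschitzWith 1 u ∧
      r = (∫ x, u x ∂(Measure.map f₀ μ)) - ∫ y, u y ∂ν}.Nonempty := by
    refine ⟨_, fun _ => (0:ℝ), (LipschitzWith.const (0:ℝ)).weaken (by norm_num), rfl⟩
  have hBdd : BddAbove {r : ℝ | ∃ u : Euc d → ℝ, LipschitzWith 1 u ∧
      r = (∫ x, u x ∂(Measure.map f₀ μ)) - ∫ y, u y ∂ν} :=
    ⟨W1 μ ν - η₀, fun r hr => hub r hr⟩
  have hu₀i : ∫ y, u₀ y ∂(Measure.map f₀ μ) = (∫ x, u₀ x ∂μ) - η₀ := by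
    rw [integral_map hf₀m.aemeasurable hcont.aestronglyMeasurable]
    have hcongr : (fun x => u₀ (f₀ x)) =ᵐ[μ] fun x => u₀ x - η₀ :=
      hkey.mono fun x hx => hx.2.2
    rw [integral_congr_ae hcongr, integral_sub Iu (integrable_const η₀),
      integral_const, probReal_univ, one_smul]
  have hW1 : W1 (Measure.map f₀ μ) ν = W1 μ ν - η₀ := by
    apply le_antisymm
    · exact csSup_le hne hub
    · have hmem : (∫ y, u₀ y ∂(Measure.map f₀ μ)) - ∫ y, u₀ y ∂ν ∈
          {r : ℝ | ∃ u : Euc d → ℝ, LipschitzWith 1 u ∧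
            r = (∫ x, u x ∂(Measure.map f₀ μ)) - ∫ y, u y ∂ν} := ⟨u₀, hLip, rfl⟩
      have := le_csSup hBdd hmem
      rw [hu₀i] at this
      calc W1 μ ν - η₀ = ((∫ x, u₀ x ∂μ) - η₀) - ∫ y, u₀ y ∂ν := by linarith [hKant]
        _ ≤ W1 (Measure.map f₀ μ) ν := this
  constructor
  · exact ⟨m2, by rw [hA, hW1]⟩
  -- the essential infimum bound
  · have hGe : (T₀ ∘ g₀) =ᵐ[Measure.map f₀ μ] hTgae.mk (T₀ ∘ g₀) := hTgae.ae_eq_mk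
    have hGm : Measurable (hTgae.mk (T₀ ∘ g₀)) := hTgae.measurable_mk
    have hFF' : (fun y => ‖y - (T₀ ∘ g₀) y‖) =ᵐ[Measure.map f₀ μ]
        (fun y => ‖y - hTgae.mk (T₀ ∘ g₀) y‖) := by
      filter_upwards [hGe] with y hy
      rw [hy]
    have hμside : ∀ᵐ x ∂μ, ell0 T₀ μ - η₀ ≤ ‖f₀ x - hTgae.mk (T₀ ∘ g₀) (f₀ x)‖ := by
      filter_upwards [hkey, hessae,
        ae_of_ae_map hf₀m.aemeasurable hFF'] with x hx hess hmk
      rw [← hmk]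
      have : ‖f₀ x - (T₀ ∘ g₀) (f₀ x)‖ = ‖x - T₀ x‖ - η₀ := by
        simp only [Function.comp_apply, hx.1]
        exact hx.2.1
      rw [this]; linarith
    have h1 : ∀ᵐ y ∂(Measure.map f₀ μ), ell0 T₀ μ - η₀ ≤ ‖y - hTgae.mk (T₀ ∘ g₀) y‖ := by
      rw [MeasureTheory.ae_map_iff hf₀m.aemeasurable
        (measurableSet_le measurable_const ((measurable_id'.sub hGm).norm) :
          MeasurableSet {y | ell0 T₀ μ - η₀ ≤ ‖y - hTgae.mk (T₀ ∘ g₀) y‖})]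
      exact hμside
    have h2 : ∀ᵐ y ∂(Measure.map f₀ μ), ell0 T₀ μ - η₀ ≤ ‖y - (T₀ ∘ g₀) y‖ := by
      filter_upwards [h1, hFF'] with y hy he
      rw [he]; exact hy
    have hcob : Filter.IsCoboundedUnder (· ≥ ·) (ae (Measure.map f₀ μ))
        (fun y => ‖y - (T₀ ∘ g₀) y‖) := by
      apply Filter.IsBoundedUnder.isCoboundedUnder_ge
      refine ⟨(R + η₀) + R, Filter.eventually_map.mpr ?_⟩
      filter_upwards [hyR, hTgΩ] with y hy hTy
      calc ‖y - (T₀ ∘ g₀) y‖ ≤ ‖y‖ + ‖(T₀ ∘ g₀) y‖ := norm_sub_le _ _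
        _ ≤ (R + η₀) + R := add_le_add hy (hΩnorm _ hTy)
    exact Filter.le_liminf_of_le hcob h2
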